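/- For h = 1, the probability generating function of the coupon collection time satisfies P_1(x) = d ∫_0^∞ e^{-t d / x} (e^t - 1)^{d-1} dt = x d Σ_{j=0}^{d-1} C(d-1,j) (-1)^{d-1-j}/(d - j x), for 0 < x < 1. -/

import Mathlib

open MeasureTheory

/-- Stirling numbers of the second kind. -/
def stirling : ℕ → ℕ → ℕ
  | 0, 0 => 1
  | 0, _ + 1 => 0
  | _ + 1, 0 => 0
  | n + 1, k + 1 => (k + 1) * stirling n (k + 1) + stirling n k

/-- `p n d = d! S(n-1,d-1)/d^n`, the probability of first completing a full collection of
`d` coupon kinds at draw `n`. -/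
noncomputable def p (n d : ℕ) : ℝ :=
  (Nat.factorial d : ℝ) * (stirling (n - 1) (d - 1) : ℝ) / (d : ℝ) ^ n

lemma neg_one_pow_sub' (n j : ℕ) (h : j ≤ n) : (-1:ℝ)^(n-j) = (-1)^(n+j) := by
  have : n + j = (n - j) + 2*j := by omega
  rw [this, pow_add, pow_mul]; simp

lemma fact_mul_stirling (m k : ℕ) :
    (k.factorial : ℝ) * (stirling m k : ℝ) =
      ∑ j ∈ Finset.range (k+1), (-1:ℝ)^(k-j) * (k.choose j) * (j:ℝ)^m := by
  induction m generalizing k with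
  | zero =>
    cases k with
    | zero => simp [stirling]
    | succ k =>
      have h0 : ((1:ℝ) - 1)^(k+1) = 0 := by simp
      rw [sub_pow] at h0
      simp only [stirling, Nat.cast_zero, mul_zero]
      rw [← h0]
      refine (Finset.sum_congr rfl fun j hj => ?_).symm
      have hj' : j ≤ k + 1 := Nat.lt_succ_iff.mp (Finset.mem_range.mp hj)
      rw [neg_one_pow_sub' (k+1) j hj', add_comm (k+1) j]
      simp
  | succ m ih =>
    cases k with
    | zero => simp [stirling]
    | succ k =>
      have key : ∀ j ∈ Finset.range (k+2),
          (-1:ℝ)^(k+1-j) * ((k+1).choose j) * (j:ℝ)^(m+1) =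
          (k+1) * ((-1:ℝ)^(k+1-j) * ((k+1).choose j) * (j:ℝ)^m)
            - (k+1) * ((-1:ℝ)^(k+1-j) * ((k.choose j : ℕ):ℝ) * (j:ℝ)^m) := by
        intro j hj
        match j with
        | 0 => simp
        | i+1 =>
          have h1 : (k+1) * (k.choose i) = (k+1).choose (i+1) * (i+1) :=
            Nat.add_one_mul_choose_eq k i
          have h2 : (k+1).choose (i+1) = k.choose i + k.choose (i+1) :=
            Nat.choose_succ_succ k i
          have hc : ((i:ℝ)+1) * (((k+1).choose (i+1) : ℕ):ℝ) =
              ((k:ℝ)+1) * ((((k+1).choose (i+1) : ℕ):ℝ) - ((k.choose (i+1) : ℕ):ℝ)) := by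
            have h1' : ((k:ℝ)+1) * ((k.choose i : ℕ):ℝ)
                = (((k+1).choose (i+1) : ℕ):ℝ) * ((i:ℝ)+1) := by exact_mod_cast h1
            have h2' : (((k+1).choose (i+1) : ℕ):ℝ)
                = ((k.choose i : ℕ):ℝ) + ((k.choose (i+1) : ℕ):ℝ) := by exact_mod_cast h2
            rw [h2'] at h1' ⊢; linear_combination -h1'
          have he : k+1-(i+1) = k - i := by omega
          rw [he] at *
          push_cast
          push_cast at hc
          linear_combination ((-1:ℝ)^(k-i) * ((i:ℝ)+1)^m) * hc
      -- now assemble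
      have hsplit : ∑ j ∈ Finset.range (k+2), (-1:ℝ)^(k+1-j) * ((k.choose j : ℕ):ℝ) * (j:ℝ)^m
          = - ∑ j ∈ Finset.range (k+1), (-1:ℝ)^(k-j) * ((k.choose j : ℕ):ℝ) * (j:ℝ)^m := by
        rw [Finset.sum_range_succ, Nat.choose_succ_self]
        simp only [Nat.cast_zero, mul_zero, zero_mul, add_zero]
        rw [← Finset.sum_neg_distrib]
        refine Finset.sum_congr rfl fun j hj => ?_
        have hj' : j ≤ k := Nat.lt_succ_iff.mp (Finset.mem_range.mp hj)
        have : k + 1 - j = (k - j) + 1 := by omega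
        rw [this, pow_succ]
        ring
      rw [Finset.sum_congr rfl key, Finset.sum_sub_distrib, ← Finset.mul_sum, ← Finset.mul_sum,
        hsplit, ← ih, ← ih]
      show ((((k+1).factorial : ℕ)):ℝ) * (((k+1) * stirling m (k+1) + stirling m k : ℕ):ℝ) = _
      push_cast [Nat.factorial_succ]
      ring

lemma integral_exp_neg_mul' {b : ℝ} (hb : 0 < b) :
    ∫ t in Set.Ioi (0:ℝ), Real.exp (-(b*t)) = b⁻¹ := by
  have h := integral_comp_mul_left_Ioi (fun s => Real.exp (-s)) 0 hb
  simp only [mul_zero, integral_exp_neg_Ioi_zero, smul_eq_mul, mul_one] at h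
  exact h

/-- For `0 < x < 1`, the probability generating function `P_1(x) = Σ_n p(n,d) x^n`
satisfies `P_1(x) = d ∫_0^∞ e^{-td/x}(e^t - 1)^{d-1} dt
                  = x d Σ_{j=0}^{d-1} C(d-1,j)(-1)^{d-1-j}/(d - jx)`. -/
theorem pgf_h_eq_one (d : ℕ) (hd : 1 ≤ d) (x : ℝ) (hx0 : 0 < x) (hx1 : x < 1) :
    (∑' n : ℕ, p (n + 1) d * x ^ (n + 1)
        = (d : ℝ) * ∫ t in Set.Ioi (0 : ℝ),
            Real.exp (-(t * d) / x) * (Real.exp t - 1) ^ (d - 1)) ∧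
    (∑' n : ℕ, p (n + 1) d * x ^ (n + 1)
        = x * d * ∑ j ∈ Finset.range d,
            (Nat.choose (d - 1) j : ℝ) * (-1 : ℝ) ^ (d - 1 - j) / ((d : ℝ) - (j : ℝ) * x)) := by
  obtain ⟨e, rfl⟩ : ∃ e, d = e + 1 := ⟨d - 1, (Nat.succ_pred_eq_of_pos hd).symm⟩
  simp only [Nat.add_sub_cancel]
  set d := e + 1 with hdef
  have hd0 : (0:ℝ) < d := by positivity
  have hd0' : (d:ℝ) ≠ 0 := hd0.ne'
  set c : ℕ → ℝ := fun j => (e.choose j : ℝ) * (-1:ℝ)^(e-j) with hc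
  have hjx : ∀ j, j ∈ Finset.range d → (j:ℝ) * x < d := by
    intro j hj
    have hj' : (j:ℝ) < d := by exact_mod_cast Finset.mem_range.mp hj
    nlinarith [Nat.cast_nonneg (α := ℝ) j]
  have hr : ∀ j ∈ Finset.range d, 0 ≤ (j:ℝ)*x/d ∧ (j:ℝ)*x/d < 1 := by
    intro j hj
    refine ⟨by positivity, ?_⟩
    rw [div_lt_one hd0]; exact hjx j hj
  have hterm : ∀ n : ℕ, p (n+1) d * x^(n+1)
      = ∑ j ∈ Finset.range d, c j * x * ((j:ℝ)*x/d)^n := by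
    intro n
    have hfac : (d.factorial : ℝ) = d * (e.factorial : ℕ) := by
      rw [hdef, Nat.factorial_succ]; push_cast; ring
    unfold p
    simp only [Nat.add_sub_cancel]
    rw [show d - 1 = e from rfl, hfac, mul_assoc, fact_mul_stirling n e, Finset.mul_sum,
      Finset.sum_div, Finset.sum_mul]
    refine Finset.sum_congr rfl fun j hj => ?_
    have hdn : ((d:ℝ))^(n+1) ≠ 0 := pow_ne_zero _ hd0'
    simp only [hc]
    field_simp
    rw [div_pow, mul_pow]
    field_simp
    ring
  have hsumm : ∀ j ∈ Finset.range d, Summable (fun n : ℕ => c j * x * ((j:ℝ)*x/d)^n) := by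
    intro j hj
    exact (summable_geometric_of_lt_one (hr j hj).1 (hr j hj).2).mul_left _
  have key2 : ∑' n : ℕ, p (n + 1) d * x ^ (n + 1)
      = ∑ j ∈ Finset.range d, c j * x * (1 - (j:ℝ)*x/d)⁻¹ := by
    rw [tsum_congr hterm, Summable.tsum_finsetSum hsumm]
    refine Finset.sum_congr rfl fun j hj => ?_
    rw [tsum_mul_left, tsum_geometric_of_lt_one (hr j hj).1 (hr j hj).2]
  have hne : ∀ j ∈ Finset.range d, ((d:ℝ) - (j:ℝ)*x ≠ 0) ∧ ((1:ℝ) - (j:ℝ)*x/d ≠ 0) := by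
    intro j hj
    have h1 := hjx j hj
    have h2 := (hr j hj).2
    exact ⟨by linarith, by intro h; rw [sub_eq_zero] at h; linarith [h.symm]⟩
  have key2' : ∑' n : ℕ, p (n + 1) d * x ^ (n + 1)
      = x * d * ∑ j ∈ Finset.range d, (e.choose j : ℝ) * (-1:ℝ)^(e-j) / ((d:ℝ) - (j:ℝ)*x) := by
    rw [key2, Finset.mul_sum]
    refine Finset.sum_congr rfl fun j hj => ?_
    obtain ⟨h1, h2⟩ := hne j hj
    simp only [hc]
    field_simp
  refine ⟨?_, key2'⟩
  have hb : ∀ j ∈ Finset.range d, 0 < (d:ℝ)/x - j := by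
    intro j hj
    have := hjx j hj
    rw [sub_pos, lt_div_iff₀ hx0]
    linarith
  have hintegrand : ∀ t : ℝ, Real.exp (-(t * d) / x) * (Real.exp t - 1) ^ e
      = ∑ j ∈ Finset.range d, c j * Real.exp (-(((d:ℝ)/x - j) * t)) := by
    intro t
    rw [sub_pow, Finset.mul_sum]
    refine Finset.sum_congr rfl fun j hj => ?_
    have hj' : j ≤ e := Nat.lt_succ_iff.mp (Finset.mem_range.mp hj)
    simp only [hc]
    rw [neg_one_pow_sub' e j hj', one_pow, ← Real.exp_nat_mul]
    have hexp2 : Real.exp (-(t*(d:ℝ))/x) * Real.exp ((j:ℝ)*t)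
        = Real.exp (-(((d:ℝ)/x - (j:ℝ)) * t)) := by
      rw [← Real.exp_add]; congr 1; field_simp; ring
    rw [add_comm e j, ← hexp2]
    ring
  have hint : ∀ j ∈ Finset.range d,
      IntegrableOn (fun t : ℝ => c j * Real.exp (-(((d:ℝ)/x - j) * t))) (Set.Ioi 0) := by
    intro j hj
    have h := (exp_neg_integrableOn_Ioi 0 (hb j hj)).const_mul (c j)
    simpa only [neg_mul, IntegrableOn] using h
  have hcalc : ∫ t in Set.Ioi (0:ℝ), Real.exp (-(t * d) / x) * (Real.exp t - 1) ^ e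
      = ∑ j ∈ Finset.range d, c j * ((d:ℝ)/x - j)⁻¹ := by
    rw [integral_congr_ae (Filter.Eventually.of_forall hintegrand),
      integral_finset_sum _ hint]
    refine Finset.sum_congr rfl fun j hj => ?_
    rw [integral_const_mul, integral_exp_neg_mul' (hb j hj)]
  rw [key2, hcalc, Finset.mul_sum]
  refine Finset.sum_congr rfl fun j hj => ?_
  have e1 : (1 - (j:ℝ)*x/d) = ((d:ℝ) - (j:ℝ)*x)/d := by field_simp
  have e2 : (d:ℝ)/x - (j:ℝ) = ((d:ℝ) - (j:ℝ)*x)/x := by field_simp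
  rw [e1, e2, inv_div, inv_div, div_eq_mul_inv, div_eq_mul_inv]
  ring
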